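/- Let ω ∈ ℝ^d be Diophantine with constant κ and exponent τ. Let κ' ∈ (0,1), C > 0, F̃ ∈ gl(n,ℂ), ε̃ = ||F̃||, Ñ ∈ ℕ, and let Ã ∈ gl(n,ℂ) have DC^Ñ_ω(κ',τ) spectrum. There exists a constant c depending only on n and τ such that if ε̃ ≤ c(C^τ κ'/(1+||Ã||))^{2n} and Ñ ≤ |log ε̃|⁴/C, then Ã + F̃ has DC^Ñ_ω(3κ'/4, τ) spectrum. -/

import Mathlib

open scoped BigOperators
open MeasureTheory Matrix

noncomputable section

attribute [local instance] Matrix.linftyOpNormedAddCommGroup Matrix.linftyOpNormedSpace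

/-- Iterated partial derivative with multi-index `α`. -/
def mpd {d : ℕ} {E : Type*} [NormedAddCommGroup E] [NormedSpace ℝ E]
    (α : Fin d → ℕ) (f : (Fin d → ℝ) → E) : (Fin d → ℝ) → E :=
  (List.finRange d).foldr
    (fun i g =>
      (fun (h : (Fin d → ℝ) → E) (θ : Fin d → ℝ) => fderiv ℝ h θ (Pi.single i 1))^[α i] g) f

/-- The quantity whose supremum over `p = (α, θ)` is the Gevrey-2 norm `‖f‖_r`. -/
def gevreyQ {d : ℕ} {E : Type*} [NormedAddCommGroup E] [NormedSpace ℝ E]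
    (r : ℝ) (f : (Fin d → ℝ) → E) (p : (Fin d → ℕ) × (Fin d → ℝ)) : ℝ :=
  r ^ (2 * ∑ i, p.1 i) / ((∏ i, Nat.factorial (p.1 i) : ℕ) : ℝ) ^ 2 * ‖mpd p.1 f p.2‖

/-- `‖f‖_r ≤ M`. -/
def GevreyLe {d : ℕ} {E : Type*} [NormedAddCommGroup E] [NormedSpace ℝ E]
    (r : ℝ) (f : (Fin d → ℝ) → E) (M : ℝ) : Prop :=
  ∀ p, gevreyQ r f p ≤ M

/-- The Gevrey-2 norm of `f` is finite. -/
def GevreyFinite {d : ℕ} {E : Type*} [NormedAddCommGroup E] [NormedSpace ℝ E]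
    (r : ℝ) (f : (Fin d → ℝ) → E) : Prop :=
  BddAbove (Set.range (gevreyQ r f))

/-- The Gevrey-2 norm `‖f‖_r`. -/
def gevreyNorm {d : ℕ} {E : Type*} [NormedAddCommGroup E] [NormedSpace ℝ E]
    (r : ℝ) (f : (Fin d → ℝ) → E) : ℝ :=
  ⨆ p, gevreyQ r f p

/-- `ℤ^d`-periodicity (function on the torus `𝕋^d`). -/
def Per1 {d : ℕ} {E : Type*} (f : (Fin d → ℝ) → E) : Prop :=
  ∀ (θ : Fin d → ℝ) (k : Fin d → ℤ), f (θ + fun i => (k i : ℝ)) = f θ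

/-- `2ℤ^d`-periodicity (function on the double torus `2𝕋^d`). -/
def Per2 {d : ℕ} {E : Type*} (f : (Fin d → ℝ) → E) : Prop :=
  ∀ (θ : Fin d → ℝ) (k : Fin d → ℤ), f (θ + fun i => 2 * (k i : ℝ)) = f θ

/-- The character `e^{2πi⟨m/2,θ⟩}` attached to the half-integer vector `m/2`, `m ∈ ℤ^d`. -/
def eHalf {d : ℕ} (m : Fin d → ℤ) (θ : Fin d → ℝ) : ℂ :=
  Complex.exp ((2 * Real.pi * Complex.I) * ∑ i, ((m i : ℂ) / 2) * (θ i : ℂ))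

/-- `|m/2| = |m₁|/2 + ⋯ + |m_d|/2` for a half-integer vector `m/2`. -/
def hnorm {d : ℕ} (m : Fin d → ℤ) : ℝ := (∑ i, |(m i : ℝ)|) / 2

/-- Fourier coefficient `f̂(m/2) = 2^{-d}∫_{[0,2]^d} f(θ)e^{-2πi⟨m/2,θ⟩}dθ`. -/
def fourierC {d n : ℕ} (f : (Fin d → ℝ) → Matrix (Fin n) (Fin n) ℂ) (m : Fin d → ℤ) :
    Matrix (Fin n) (Fin n) ℂ :=
  ((2 : ℝ) ^ d)⁻¹ • ∫ θ in Set.Icc (0 : Fin d → ℝ) (fun _ => 2), eHalf (-m) θ • f θ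

/-- Truncation of `f` at order `N`: `f^N = Σ_{|m|≤N} f̂(m)e^{2πi⟨m,·⟩}`. -/
def truncN {d n : ℕ} (N : ℕ) (f : (Fin d → ℝ) → Matrix (Fin n) (Fin n) ℂ) :
    (Fin d → ℝ) → Matrix (Fin n) (Fin n) ℂ :=
  fun θ => ∑ m ∈ (Finset.Icc (fun _ => -(2 * (N : ℤ))) (fun _ => (2 * (N : ℤ)))).filter
      (fun m : Fin d → ℤ => hnorm m ≤ N),
    eHalf m θ • fourierC f m

/-- `ω` is Diophantine with constant `κ` and exponent `τ`. -/
def IsDioph {d : ℕ} (ω : Fin d → ℝ) (κ τ : ℝ) : Prop :=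
  ∀ m : Fin d → ℤ, m ≠ 0 → κ / (∑ i, |(m i : ℝ)|) ^ τ ≤ |∑ i, (m i : ℝ) * ω i|

/-- `A` has `DC^N_ω(κ',τ)` spectrum. -/
def DCspec {d n : ℕ} (ω : Fin d → ℝ) (N : ℕ) (κ' τ : ℝ)
    (A : Matrix (Fin n) (Fin n) ℂ) : Prop :=
  ∀ α ∈ spectrum ℂ A, ∀ β ∈ spectrum ℂ A, ∀ m : Fin d → ℤ, m ≠ 0 → hnorm m ≤ N →
    κ' / hnorm m ^ τ ≤
      ‖α - β - (2 * Real.pi * Complex.I) * ∑ i, ((m i : ℂ) / 2) * (ω i : ℂ)‖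

/-- The trivial map `Φ(θ) = Σ_L e^{2πi⟨m_L,θ⟩}P_L` attached to a decomposition. -/
def PhiTriv {d n s : ℕ} (P : Fin s → Matrix (Fin n) (Fin n) ℂ)
    (m : Fin s → Fin d → ℤ) (θ : Fin d → ℝ) : Matrix (Fin n) (Fin n) ℂ :=
  ∑ L, eHalf (m L) θ • P L

/-- `F` has good periodicity properties w.r.t. the decomposition `P` and the family `m`:
`Φ⁻¹FΦ` is `ℤ^d`-periodic. -/
def GoodPer {d n s : ℕ} (F : (Fin d → ℝ) → Matrix (Fin n) (Fin n) ℂ)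
    (P : Fin s → Matrix (Fin n) (Fin n) ℂ) (m : Fin s → Fin d → ℤ) : Prop :=
  Per1 (fun θ => PhiTriv P (fun L => -(m L)) θ * F θ * PhiTriv P m θ)

/-- Directional derivative `∂_ω f`. -/
def dOm {d : ℕ} {E : Type*} [NormedAddCommGroup E] [NormedSpace ℝ E]
    (ω : Fin d → ℝ) (f : (Fin d → ℝ) → E) (θ : Fin d → ℝ) : E :=
  fderiv ℝ f θ ω


/-! ### Auxiliary lemmas for `stmt_10` -/

open Polynomial in
theorem aux_charpoly_eval' {n : ℕ} (A : Matrix (Fin n) (Fin n) ℂ) (μ : ℂ) :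
    (Matrix.charpoly A).eval μ = (Matrix.scalar (Fin n) μ - A).det := by
  exact Matrix.eval_charpoly A μ

/-- The determinant as a continuous multilinear map in the rows. -/
noncomputable def auxDetCMM (n : ℕ) :
    ContinuousMultilinearMap ℂ (fun _ : Fin n => (Fin n → ℂ)) ℂ :=
  (Matrix.detRowAlternating : (Fin n → ℂ) [⋀^Fin n]→ₗ[ℂ] ℂ).toMultilinearMap.mkContinuous
    (n.factorial) (by
      intro M
      have h1 : (Matrix.detRowAlternating (R := ℂ) (n := Fin n)).toMultilinearMap M
          = Matrix.det (Matrix.of M) := rfl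
      rw [h1, Matrix.det_apply]
      refine (norm_sum_le _ _).trans ?_
      have hterm : ∀ σ : Equiv.Perm (Fin n),
          ‖Equiv.Perm.sign σ • ∏ i, Matrix.of M (σ i) i‖ ≤ ∏ i, ‖M i‖ := by
        intro σ
        have h2 : ‖Equiv.Perm.sign σ • ∏ i, Matrix.of M (σ i) i‖
            = ‖∏ i, Matrix.of M (σ i) i‖ := by
          rcases Int.units_eq_one_or (Equiv.Perm.sign σ) with h | h <;> simp [h]
        rw [h2]
        calc ‖∏ i, Matrix.of M (σ i) i‖ = ∏ i, ‖Matrix.of M (σ i) i‖ := by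
              simp [norm_prod]
          _ ≤ ∏ i, ‖M (σ i)‖ := by
              refine Finset.prod_le_prod (fun i _ => norm_nonneg _) (fun i _ => ?_)
              exact norm_le_pi_norm (M (σ i)) i
          _ = ∏ i, ‖M i‖ := Equiv.prod_comp σ (fun i => ‖M i‖)
      calc ∑ σ : Equiv.Perm (Fin n), ‖Equiv.Perm.sign σ • ∏ i, Matrix.of M (σ i) i‖
          ≤ ∑ _σ : Equiv.Perm (Fin n), ∏ i, ‖M i‖ := Finset.sum_le_sum fun σ _ => hterm σ
        _ = (n.factorial : ℝ) * ∏ i, ‖M i‖ := by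
            simp [Finset.sum_const, Fintype.card_perm])

theorem aux_pi2_norm_le {k n : ℕ} (x : Fin k → Fin n → ℂ) {R : ℝ} (hR : 0 ≤ R)
    (h : ∀ i j, ‖x i j‖ ≤ R) : ‖x‖ ≤ R :=
  (pi_norm_le_iff_of_nonneg hR).2 fun i => (pi_norm_le_iff_of_nonneg hR).2 (h i)

theorem aux_entry_le_linfty {n : ℕ} (M : Matrix (Fin n) (Fin n) ℂ) (i j : Fin n) :
    ‖M i j‖ ≤ ‖M‖ := by
  have h : ‖M i j‖₊ ≤ ‖M‖₊ := by
    rw [Matrix.linfty_opNNNorm_def]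
    refine le_trans ?_ (Finset.le_sup (Finset.mem_univ i))
    exact Finset.single_le_sum (f := fun k => ‖M i k‖₊) (fun k _ => by positivity) (Finset.mem_univ j)
  exact_mod_cast h

theorem aux_ms_pow_le {a : ℝ} (ha : 0 ≤ a) (s : Multiset ℝ) (h : ∀ x ∈ s, a ≤ x) :
    a ^ (Multiset.card s) ≤ s.prod := by
  induction s using Multiset.induction_on with
  | empty => simp
  | cons x t ih =>
      simp only [Multiset.card_cons, Multiset.prod_cons, pow_succ]
      have hx : a ≤ x := h x (Multiset.mem_cons_self x t)
      have ht : a ^ (Multiset.card t) ≤ t.prod := ih fun y hy => h y (Multiset.mem_cons_of_mem hy)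
      calc a ^ Multiset.card t * a ≤ t.prod * x :=
            mul_le_mul ht hx ha (le_trans (pow_nonneg ha _) ht)
        _ = x * t.prod := mul_comm _ _

theorem aux_scalar_entry_le {n : ℕ} (μ : ℂ) (i j : Fin n) :
    ‖Matrix.scalar (Fin n) μ i j‖ ≤ ‖μ‖ := by
  rcases eq_or_ne i j with rfl | hij
  · simp [Matrix.scalar_apply, Matrix.diagonal_apply_eq]
  · simp [Matrix.scalar_apply, Matrix.diagonal_apply_ne _ hij]

open Polynomial in
/-- Eigenvalue perturbation: every eigenvalue of `A + F` is close to an eigenvalue of `A`. -/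
theorem aux_eig_close {n : ℕ} (hn : 0 < n) (A F : Matrix (Fin n) (Fin n) ℂ) {μ : ℂ}
    (hμ : μ ∈ spectrum ℂ (A + F)) :
    ∃ α ∈ spectrum ℂ A,
      ‖μ - α‖ ^ n ≤
        (n.factorial : ℝ) * n * (‖μ‖ + ‖A‖ + ‖F‖) ^ (n - 1) * ‖F‖ := by
  haveI : Nonempty (Fin n) := Fin.pos_iff_nonempty.1 hn
  set X : Matrix (Fin n) (Fin n) ℂ := Matrix.scalar (Fin n) μ - A with hXdef
  set S : Matrix (Fin n) (Fin n) ℂ := Matrix.scalar (Fin n) μ - (A + F) with hSdef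
  set R : ℝ := ‖μ‖ + ‖A‖ + ‖F‖ with hRdef
  have hR0 : 0 ≤ R := by positivity
  have halg : ∀ z : ℂ, algebraMap ℂ (Matrix (Fin n) (Fin n) ℂ) z = Matrix.scalar (Fin n) z := by
    intro z
    simp [Matrix.algebraMap_eq_diagonal, Matrix.scalar_apply]
  have hSdet : S.det = 0 := by
    by_contra h
    apply spectrum.mem_iff.1 hμ
    have : IsUnit S := (Matrix.isUnit_iff_isUnit_det S).2 (isUnit_iff_ne_zero.2 h)
    rwa [halg]
  have hdetX : ‖X.det‖ ≤ (n.factorial : ℝ) * n * R ^ (n - 1) * ‖F‖ := by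
    have hkey := (auxDetCMM n).norm_image_sub_le (fun i => X i) (fun i => S i)
    rw [Fintype.card_fin] at hkey
    have hsubeq : ((fun i => X i) - (fun i => S i)) = fun i => ((X - S) i) := rfl
    have hXS : X - S = F := by
      rw [hXdef, hSdef]; abel
    have heq : ‖auxDetCMM n (fun i => X i) - auxDetCMM n (fun i => S i)‖
        = ‖X.det‖ := by
      have e1 : auxDetCMM n (fun i => X i) = X.det := rfl
      have e2 : auxDetCMM n (fun i => S i) = S.det := rfl
      rw [e1, e2, hSdet, sub_zero]
    rw [← heq]
    refine hkey.trans ?_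
    have hXpi : ‖fun i => X i‖ ≤ R := by
      refine aux_pi2_norm_le _ hR0 fun i j => ?_
      have h0 : X i j = Matrix.scalar (Fin n) μ i j - A i j := rfl
      rw [h0]
      have h1 := aux_scalar_entry_le μ i j
      have h2 := aux_entry_le_linfty A i j
      have h3 : (0:ℝ) ≤ ‖F‖ := norm_nonneg _
      have h4 := norm_sub_le (Matrix.scalar (Fin n) μ i j) (A i j)
      rw [hRdef]; linarith
    have hSpi : ‖fun i => S i‖ ≤ R := by
      refine aux_pi2_norm_le _ hR0 fun i j => ?_
      have h0 : S i j = Matrix.scalar (Fin n) μ i j - (A i j + F i j) := rfl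
      rw [h0]
      have h1 := aux_scalar_entry_le μ i j
      have h2 := aux_entry_le_linfty A i j
      have h3 := aux_entry_le_linfty F i j
      have h4 := norm_sub_le (Matrix.scalar (Fin n) μ i j) (A i j + F i j)
      have h5 := norm_add_le (A i j) (F i j)
      rw [hRdef]; linarith
    have hsub : ‖(fun i => X i) - (fun i => S i)‖ ≤ ‖F‖ := by
      rw [hsubeq, hXS]
      exact aux_pi2_norm_le _ (norm_nonneg F) fun i j => aux_entry_le_linfty F i j
    have hd : ‖auxDetCMM n‖ ≤ (n.factorial : ℝ) :=
      MultilinearMap.mkContinuous_norm_le _ (by positivity) _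
    have hmax : max ‖fun i => X i‖ ‖fun i => S i‖ ≤ R := max_le hXpi hSpi
    gcongr
  set p := Matrix.charpoly A with hp
  have hmonic : p.Monic := Matrix.charpoly_monic A
  have hsplit : p.Splits := IsAlgClosed.splits p
  have hdeg : p.natDegree = n := by
    rw [hp, Matrix.charpoly_natDegree_eq_dim, Fintype.card_fin]
  have hcard : Multiset.card p.roots = n := by
    rw [Polynomial.splits_iff_card_roots.1 hsplit, hdeg]
  have hne : p.roots.toFinset.Nonempty := by
    have hz : p.roots ≠ 0 := by
      intro h0
      rw [h0] at hcard; simp at hcard; omega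
    obtain ⟨x, hx⟩ := Multiset.exists_mem_of_ne_zero hz
    exact ⟨x, Multiset.mem_toFinset.2 hx⟩
  obtain ⟨α, hαF, hαmin⟩ := p.roots.toFinset.exists_min_image (fun r => ‖μ - r‖) hne
  have hαroot : α ∈ p.roots := Multiset.mem_toFinset.1 hαF
  have hαspec : α ∈ spectrum ℂ A := by
    rw [spectrum.mem_iff, halg]
    intro hu
    have hdet : IsUnit (Matrix.scalar (Fin n) α - A).det := (Matrix.isUnit_iff_isUnit_det _).1 hu
    have hzero : (Matrix.scalar (Fin n) α - A).det = 0 := by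
      rw [← aux_charpoly_eval']
      exact (Polynomial.isRoot_of_mem_roots hαroot)
    rw [hzero] at hdet
    exact (by simp : ¬ IsUnit (0:ℂ)) hdet
  refine ⟨α, hαspec, ?_⟩
  have hfact : p.eval μ = ((p.roots).map (fun r => μ - r)).prod := by
    conv_lhs => rw [hsplit.eq_prod_roots_of_monic hmonic]
    rw [Polynomial.eval_multiset_prod, Multiset.map_map]
    congr 1
    ext r
    simp
  have habs : ‖p.eval μ‖
      = ((p.roots).map (fun r => ‖μ - r‖)).prod := by
    rw [hfact]
    have := map_multiset_prod (normHom : ℂ →*₀ ℝ) ((p.roots).map (fun r => μ - r))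
    rw [Multiset.map_map] at this
    exact this
  have hpow : ‖μ - α‖ ^ n ≤ ‖p.eval μ‖ := by
    rw [habs, ← hcard]
    have hc2 : Multiset.card ((p.roots).map (fun r => ‖μ - r‖))
        = Multiset.card p.roots := Multiset.card_map _ _
    rw [← hc2]
    refine aux_ms_pow_le (by positivity) _ fun x hx => ?_
    obtain ⟨r, hr, rfl⟩ := Multiset.mem_map.1 hx
    exact hαmin r (Multiset.mem_toFinset.2 hr)
  have hevaldet : ‖p.eval μ‖ = ‖X.det‖ := by
    rw [hp, aux_charpoly_eval']
  calc ‖μ - α‖ ^ n ≤ ‖p.eval μ‖ := hpow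
    _ = ‖X.det‖ := hevaldet
    _ ≤ _ := hdetX

section
attribute [local instance] Matrix.linftyOpNormedRing Matrix.linftyOpNormedAlgebra

theorem aux_spec_abs_le {n : ℕ} (hn : 0 < n) (A : Matrix (Fin n) (Fin n) ℂ) {μ : ℂ}
    (hμ : μ ∈ spectrum ℂ A) : ‖μ‖ ≤ ‖A‖ := by
  haveI : Nonempty (Fin n) := Fin.pos_iff_nonempty.1 hn
  haveI : CompleteSpace (Matrix (Fin n) (Fin n) ℂ) := FiniteDimensional.complete ℂ _
  exact spectrum.norm_le_norm_of_mem hμ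

end

theorem aux_log_le_rpow {B x : ℝ} (hB : 1 ≤ B) (hx : 1 ≤ x) :
    Real.log x ≤ B * x ^ (1/B : ℝ) := by
  have hx0 : 0 < x := lt_of_lt_of_le one_pos hx
  have hB0 : (0:ℝ) < B := lt_of_lt_of_le one_pos hB
  have h1 : Real.log (x ^ (1/B : ℝ)) = (1/B) * Real.log x := Real.log_rpow hx0 _
  have h2 : Real.log (x ^ (1/B : ℝ)) ≤ x ^ (1/B : ℝ) := by
    have := Real.log_le_sub_one_of_pos (Real.rpow_pos_of_pos hx0 (1/B))
    linarith
  calc Real.log x = B * ((1/B) * Real.log x) := by field_simp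
    _ = B * Real.log (x ^ (1/B : ℝ)) := by rw [h1]
    _ ≤ B * x ^ (1/B : ℝ) := by
        exact mul_le_mul_of_nonneg_left (h1 ▸ h2) (le_of_lt hB0)

theorem aux_rpow_pow {L p : ℝ} (hL : 0 ≤ L) (k : ℕ) :
    (L ^ p) ^ k = L ^ (p * k) := by
  rw [← Real.rpow_natCast (L ^ p) k, ← Real.rpow_mul hL]

theorem aux_hnorm_ge {d : ℕ} {m : Fin d → ℤ} (hm : m ≠ 0) : (1:ℝ)/2 ≤ hnorm m := by
  obtain ⟨i, hi⟩ : ∃ i, m i ≠ 0 := Function.ne_iff.1 hm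
  have h1 : (1:ℝ) ≤ |(m i : ℝ)| := by
    have := Int.one_le_abs (by exact_mod_cast hi : m i ≠ 0)
    exact_mod_cast (by exact_mod_cast this : (1:ℤ) ≤ |m i|)
  have h2 : (1:ℝ) ≤ ∑ j, |(m j : ℝ)| := by
    refine h1.trans ?_
    exact Finset.single_le_sum (f := fun j => |(m j : ℝ)|) (fun j _ => abs_nonneg _)
      (Finset.mem_univ i)
  unfold hnorm
  linarith

set_option maxHeartbeats 1600000 in
/-- stability of the Diophantine-spectrum condition under perturbation: there is
`c = c(n,τ) > 0` such that if `Ã` has `DC^Ñ_ω(κ',τ)` spectrum,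
`ε̃ = ‖F̃‖ ≤ c(C^τκ'/(1+‖Ã‖))^{2n}` and `Ñ ≤ |log ε̃|⁴/C`, then `Ã + F̃` has
`DC^Ñ_ω(3κ'/4,τ)` spectrum. -/
theorem stmt_10 (n d : ℕ) (τ : ℝ) (hτ : max 1 ((d : ℝ) - 1) < τ) :
    ∃ c : ℝ, 0 < c ∧
    ∀ (κ : ℝ) (ω : Fin d → ℝ), 0 < κ → κ < 1 → (∀ i, |ω i| ≤ 1) → IsDioph ω κ τ →
    ∀ (κ' C : ℝ) (Ft At : Matrix (Fin n) (Fin n) ℂ) (Nt : ℕ),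
      0 < κ' → κ' < 1 → 0 < C →
      DCspec ω Nt κ' τ At →
      ‖Ft‖ ≤ c * (C ^ τ * κ' / (1 + ‖At‖)) ^ (2 * n) →
      (Nt : ℝ) ≤ |Real.log ‖Ft‖| ^ 4 / C →
      DCspec ω Nt (3 * κ' / 4) τ (At + Ft) := by
  have hτ1 : (1:ℝ) < τ := lt_of_le_of_lt (le_max_left _ _) hτ
  have hτ0 : (0:ℝ) < τ := lt_trans one_pos hτ1
  set K : ℝ := (n.factorial : ℝ) * n * 2^n with hK
  set b : ℝ := 8 * τ * n with hbdef
  set B : ℝ := 2 * b + 2 with hBdef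
  set G : ℝ := B ^ b with hGdef
  set D : ℝ := K * 8^n * G + G + 1 with hDdef
  have hb0 : (0:ℝ) ≤ b := by
    rw [hbdef]
    have hn0 : (0:ℝ) ≤ (n:ℝ) := Nat.cast_nonneg n
    nlinarith
  have hB1 : (1:ℝ) ≤ B := by rw [hBdef]; linarith
  have hB0 : (0:ℝ) < B := lt_of_lt_of_le one_pos hB1
  have hG1 : (1:ℝ) ≤ G := Real.one_le_rpow hB1 hb0
  have hG0 : (0:ℝ) < G := lt_of_lt_of_le one_pos hG1
  have hK0 : (0:ℝ) ≤ K := by rw [hK]; positivity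
  have h8n : (0:ℝ) ≤ K * 8^n * G := by positivity
  have hD1 : (1:ℝ) ≤ D := by rw [hDdef]; linarith only [h8n, hG1]
  have hD0 : (0:ℝ) < D := lt_of_lt_of_le one_pos hD1
  refine ⟨(D⁻¹)^2, by positivity, ?_⟩
  intro κ ω hκ hκ1 hω hdio κ' C Ft At Nt hκ'0 hκ'1 hC0 hAspec hF hNt
  intro μ hμ ν hν m hm hmN
  rcases Nat.eq_zero_or_pos n with hn0 | hn
  · exfalso
    subst hn0
    haveI hsub : Subsingleton (Matrix (Fin 0) (Fin 0) ℂ) :=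
      ⟨fun a b => by ext i j; exact i.elim0⟩
    exact spectrum.mem_iff.1 hμ (isUnit_of_subsingleton _)
  haveI : Nonempty (Fin n) := Fin.pos_iff_nonempty.1 hn
  set ε : ℝ := ‖Ft‖ with hεdef
  set a : ℝ := ‖At‖ with hadef
  set L : ℝ := |Real.log ε| with hLdef
  set h : ℝ := hnorm m with hhdef
  have hh2 : (1:ℝ)/2 ≤ h := aux_hnorm_ge hm
  have hh0 : (0:ℝ) < h := by linarith only [hh2]
  have hNt1 : (1:ℝ) ≤ (Nt:ℝ) := by
    have h12 : (1:ℝ)/2 ≤ (Nt:ℝ) := le_trans hh2 hmN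
    rcases Nat.eq_zero_or_pos Nt with h0 | h1
    · rw [h0] at h12; norm_num at h12
    · exact_mod_cast h1
  have hCL : C ≤ L^4 := by
    have h1 : (Nt:ℝ) * C ≤ L^4 := by
      have h2' := (le_div_iff₀ hC0).1 hNt
      linarith only [h2']
    nlinarith [h1, hNt1, hC0]
  have hL0 : (0:ℝ) < L := by
    have h4 : (0:ℝ) < L^4 := lt_of_lt_of_le hC0 hCL
    have hne : L ≠ 0 := by intro h0; rw [h0] at h4; norm_num at h4
    exact lt_of_le_of_ne (abs_nonneg _) (Ne.symm hne)
  have hL0' : (0:ℝ) ≤ L := le_of_lt hL0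
  have hε0 : (0:ℝ) < ε := by
    rcases (norm_nonneg Ft).lt_or_eq with h1 | h1
    · exact h1
    · exfalso
      have : Real.log ε = 0 := by rw [hεdef, ← h1, Real.log_zero]
      rw [hLdef, this] at hL0; norm_num at hL0
  have ha0 : (0:ℝ) ≤ a := norm_nonneg _
  have h1a : (1:ℝ) ≤ 1 + a := by linarith
  have hCτ0 : (0:ℝ) < C ^ τ := Real.rpow_pos_of_pos hC0 τ
  set Q : ℝ := C ^ τ * κ' / (1 + a) with hQdef
  have hQ0 : (0:ℝ) < Q := by
    rw [hQdef]; exact div_pos (mul_pos hCτ0 hκ'0) (by linarith)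
  have hQle : Q ≤ (L^4)^τ := by
    have h1 : Q ≤ C^τ := by
      rw [hQdef]
      calc C^τ * κ' / (1 + a) ≤ C^τ * κ' / 1 := by
            refine div_le_div_of_nonneg_left ?_ one_pos h1a |>.trans_eq rfl
            positivity
        _ = C^τ * κ' := by ring
        _ ≤ C^τ * 1 := mul_le_mul_of_nonneg_left (le_of_lt hκ'1) (le_of_lt hCτ0)
        _ = C^τ := mul_one _
    exact h1.trans (Real.rpow_le_rpow (le_of_lt hC0) hCL (le_of_lt hτ0))
  have e4 : (L^4 : ℝ) = L ^ ((4:ℕ):ℝ) := (Real.rpow_natCast L 4).symm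
  have eLb : ((L^4)^τ)^(2*n) = L ^ b := by
    rw [e4, ← Real.rpow_mul hL0', aux_rpow_pow hL0']
    congr 1
    rw [hbdef]; push_cast; ring
  have hεQ : ε ≤ (D⁻¹)^2 * Q^(2*n) := hF
  have hεb : ε ≤ (D⁻¹)^2 * L ^ b := by
    refine hεQ.trans ?_
    have h1 : Q^(2*n) ≤ ((L^4)^τ)^(2*n) := pow_le_pow_left₀ (le_of_lt hQ0) hQle _
    rw [← eLb]
    exact mul_le_mul_of_nonneg_left h1 (by positivity)
  have hcG : ((D⁻¹)^2) * G ≤ 1 := by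
    have h1 : G ≤ D := by rw [hDdef]; linarith only [h8n]
    have h2 : D ≤ D^2 := le_self_pow₀ hD1 two_ne_zero
    have h3 : G ≤ D^2 := h1.trans h2
    have h4 : ((D⁻¹)^2) * G = G / D^2 := by
      field_simp
    rw [h4, div_le_one (by positivity)]
    exact h3
  have hbB : b/B < 1 := by
    rw [div_lt_one hB0, hBdef]; linarith only [hb0]
  have hε1 : ε ≤ 1 := by
    by_contra hgt
    push_neg at hgt
    have hLlog : L = Real.log ε := by
      rw [hLdef, abs_of_nonneg (Real.log_nonneg (le_of_lt hgt))]
    have hlog : Real.log ε ≤ B * ε ^ (1/B : ℝ) := aux_log_le_rpow hB1 (le_of_lt hgt)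
    have hLB : L ^ b ≤ G * ε ^ (b/B : ℝ) := by
      calc L ^ b ≤ (B * ε ^ (1/B:ℝ)) ^ b := by
            refine Real.rpow_le_rpow hL0' ?_ hb0
            rw [hLlog]; exact hlog
        _ = B^b * (ε ^ (1/B:ℝ))^b := Real.mul_rpow (le_of_lt hB0)
            (le_of_lt (Real.rpow_pos_of_pos hε0 _))
        _ = G * ε ^ (b/B : ℝ) := by
            rw [hGdef, ← Real.rpow_mul (le_of_lt hε0)]
            congr 1
            field_simp
    have hchain : ε ≤ ε ^ (b/B : ℝ) := by
      calc ε ≤ (D⁻¹)^2 * L^b := hεb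
        _ ≤ (D⁻¹)^2 * (G * ε ^ (b/B:ℝ)) := mul_le_mul_of_nonneg_left hLB (by positivity)
        _ = ((D⁻¹)^2 * G) * ε ^ (b/B:ℝ) := by ring
        _ ≤ 1 * ε ^ (b/B:ℝ) := mul_le_mul_of_nonneg_right hcG
            (le_of_lt (Real.rpow_pos_of_pos hε0 _))
        _ = ε ^ (b/B : ℝ) := one_mul _
    have hlt : ε ^ (b/B : ℝ) < ε := by
      conv_rhs => rw [← Real.rpow_one ε]
      exact Real.rpow_lt_rpow_of_exponent_lt hgt hbB
    linarith only [hchain, hlt]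
  have hlogε : Real.log ε ≤ 0 := Real.log_nonpos (le_of_lt hε0) hε1
  have hLneg : L = Real.log ε⁻¹ := by rw [hLdef, abs_of_nonpos hlogε, Real.log_inv]
  have hinv1 : (1:ℝ) ≤ ε⁻¹ := one_le_inv_iff₀.2 ⟨hε0, hε1⟩
  have hstar : ε ^ (1/2:ℝ) * L ^ (b/2 : ℝ) ≤ G := by
    have hlog2 : L ≤ B * (ε⁻¹) ^ (1/B:ℝ) := by
      rw [hLneg]; exact aux_log_le_rpow hB1 hinv1
    have hb20 : (0:ℝ) ≤ b/2 := by linarith only [hb0]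
    have h1 : L ^ (b/2:ℝ) ≤ B^(b/2:ℝ) * ((ε⁻¹) ^ (1/B:ℝ))^(b/2:ℝ) := by
      rw [← Real.mul_rpow (le_of_lt hB0)
        (le_of_lt (Real.rpow_pos_of_pos (inv_pos.2 hε0) _))]
      exact Real.rpow_le_rpow hL0' hlog2 hb20
    have h2 : ((ε⁻¹) ^ (1/B:ℝ))^(b/2:ℝ) = (ε ^ ((1/B)*(b/2) : ℝ))⁻¹ := by
      rw [Real.inv_rpow (le_of_lt hε0), Real.inv_rpow (le_of_lt (Real.rpow_pos_of_pos hε0 _)),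
        ← Real.rpow_mul (le_of_lt hε0)]
    have hsmall : ε ^ (1/2:ℝ) * (ε ^ ((1/B)*(b/2) : ℝ))⁻¹ ≤ 1 := by
      have he : ε ^ (1/2:ℝ) * (ε ^ ((1/B)*(b/2) : ℝ))⁻¹ = ε ^ (1/2 - (1/B)*(b/2) : ℝ) := by
        rw [Real.rpow_sub hε0]
        rfl
      rw [he]
      refine Real.rpow_le_one (le_of_lt hε0) hε1 ?_
      have hb2B : (1/B)*(b/2) = (b/B)/2 := by ring
      rw [hb2B]
      linarith only [hbB]
    calc ε ^ (1/2:ℝ) * L ^ (b/2:ℝ)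
        ≤ ε ^ (1/2:ℝ) * (B^(b/2:ℝ) * (ε ^ ((1/B)*(b/2):ℝ))⁻¹) := by
          rw [← h2]
          exact mul_le_mul_of_nonneg_left h1 (le_of_lt (Real.rpow_pos_of_pos hε0 _))
      _ = B^(b/2:ℝ) * (ε ^ (1/2:ℝ) * (ε ^ ((1/B)*(b/2):ℝ))⁻¹) := by ring
      _ ≤ B^(b/2:ℝ) * 1 := mul_le_mul_of_nonneg_left hsmall
          (le_of_lt (Real.rpow_pos_of_pos hB0 _))
      _ = B^(b/2:ℝ) := mul_one _
      _ ≤ G := by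
          rw [hGdef]
          exact Real.rpow_le_rpow_of_exponent_le hB1 (by linarith only [hb0])
  set T : ℝ := κ' * C^τ / (8 * (L^4)^τ) with hTdef
  have hL4τ0 : (0:ℝ) < (L^4)^τ := Real.rpow_pos_of_pos (by positivity) τ
  have hT0 : (0:ℝ) < T := by
    rw [hTdef]; exact div_pos (mul_pos hκ'0 hCτ0) (by linarith)
  have hhτ0 : (0:ℝ) < h^τ := Real.rpow_pos_of_pos hh0 τ
  have hhτ : h ^ τ ≤ (L^4)^τ / C^τ := by
    have h1 : h ≤ L^4 / C := le_trans hmN hNt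
    calc h^τ ≤ (L^4/C)^τ := Real.rpow_le_rpow (le_of_lt hh0) h1 (le_of_lt hτ0)
      _ = (L^4)^τ / C^τ := Real.div_rpow (by positivity : (0:ℝ) ≤ L^4) (le_of_lt hC0) τ
  have hTle : T ≤ κ' / (8 * h^τ) := by
    have e : T = κ' / (8 * ((L^4)^τ / C^τ)) := by
      rw [hTdef]; field_simp
    rw [e]
    refine div_le_div_of_nonneg_left (le_of_lt hκ'0) (by positivity) ?_
    linarith only [hhτ]
  have eX : ((L^4)^τ)^n = L^(b/2 : ℝ) := by
    rw [e4, ← Real.rpow_mul hL0', aux_rpow_pow hL0']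
    congr 1
    rw [hbdef]; push_cast; ring
  have eTn : T^n = (κ' * C^τ)^n / (8^n * L^(b/2 : ℝ)) := by
    rw [hTdef, div_pow]
    congr 1
    rw [mul_pow, eX]
  have hc12 : (((D⁻¹)^2 : ℝ)) ^ (1/2:ℝ) = D⁻¹ := by
    rw [← Real.rpow_natCast (D⁻¹) 2, ← Real.rpow_mul (by positivity)]
    norm_num
  have hε12 : ε ^ (1/2:ℝ) ≤ D⁻¹ * Q^n := by
    calc ε ^ (1/2:ℝ) ≤ ((D⁻¹)^2 * Q^(2*n)) ^ (1/2:ℝ) :=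
          Real.rpow_le_rpow (le_of_lt hε0) hεQ (by norm_num)
      _ = D⁻¹ * Q^n := by
          rw [Real.mul_rpow (by positivity) (by positivity), hc12]
          congr 1
          rw [← Real.rpow_natCast Q (2*n), ← Real.rpow_mul (le_of_lt hQ0),
            ← Real.rpow_natCast Q n]
          congr 1
          push_cast; ring
  have hεsplit : ε = ε ^ (1/2:ℝ) * ε ^ (1/2:ℝ) := by
    rw [← Real.rpow_add hε0]; norm_num
  have hLb2 : (0:ℝ) < L^(b/2:ℝ) := Real.rpow_pos_of_pos hL0 _
  have hP0 : (0:ℝ) < κ' * C^τ := mul_pos hκ'0 hCτ0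
  have hPn : (0:ℝ) < (κ' * C^τ)^n := pow_pos hP0 n
  have hfinal : K * D⁻¹ * ε^(1/2:ℝ) * (8^n * L^(b/2:ℝ)) ≤ 1 := by
    have h2 : K * 8^n * G ≤ D := by rw [hDdef]; linarith only [hG1]
    calc K * D⁻¹ * ε^(1/2:ℝ) * (8^n * L^(b/2:ℝ))
        = (K * 8^n) * (ε^(1/2:ℝ) * L^(b/2:ℝ)) * D⁻¹ := by ring
      _ ≤ (K * 8^n) * G * D⁻¹ := by
          refine mul_le_mul_of_nonneg_right
            (mul_le_mul_of_nonneg_left hstar (by positivity)) (by positivity)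
      _ ≤ D * D⁻¹ := mul_le_mul_of_nonneg_right h2 (by positivity)
      _ = 1 := mul_inv_cancel₀ (ne_of_gt hD0)
  have hmain : K * (1+a)^n * ε ≤ T^n := by
    rw [eTn]
    have step1 : K * (1+a)^n * ε ≤ K * D⁻¹ * ε^(1/2:ℝ) * (κ' * C^τ)^n := by
      have e0 : K * (1+a)^n * ε = (K * (1+a)^n) * (ε^(1/2:ℝ) * ε^(1/2:ℝ)) := by
        rw [← hεsplit]
      rw [e0]
      calc (K * (1+a)^n) * (ε^(1/2:ℝ) * ε^(1/2:ℝ))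
          ≤ (K * (1+a)^n) * ((D⁻¹ * Q^n) * ε^(1/2:ℝ)) := by
            refine mul_le_mul_of_nonneg_left
              (mul_le_mul_of_nonneg_right hε12 (by positivity)) (by positivity)
        _ = K * D⁻¹ * ε^(1/2:ℝ) * ((1+a)^n * Q^n) := by ring
        _ = K * D⁻¹ * ε^(1/2:ℝ) * (κ' * C^τ)^n := by
            congr 1
            rw [hQdef, div_pow]
            have hne : ((1+a)^n : ℝ) ≠ 0 := by positivity
            field_simp
    refine step1.trans ?_
    rw [le_div_iff₀ (by positivity)]
    calc K * D⁻¹ * ε^(1/2:ℝ) * (κ' * C^τ)^n * (8^n * L^(b/2:ℝ))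
        = (K * D⁻¹ * ε^(1/2:ℝ) * (8^n * L^(b/2:ℝ))) * (κ' * C^τ)^n := by ring
      _ ≤ 1 * (κ' * C^τ)^n := mul_le_mul_of_nonneg_right hfinal (le_of_lt hPn)
      _ = (κ' * C^τ)^n := one_mul _
  have hdist : ∀ μ', μ' ∈ spectrum ℂ (At + Ft) →
      ∃ α ∈ spectrum ℂ At, ‖μ' - α‖ ≤ κ' / (8 * h^τ) := by
    intro μ' hμ'
    obtain ⟨α, hα, hbound⟩ := aux_eig_close hn At Ft hμ'
    refine ⟨α, hα, ?_⟩
    have habsμ : ‖μ'‖ ≤ a + ε := by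
      have h1 := aux_spec_abs_le hn (At + Ft) hμ'
      have h2 : ‖At + Ft‖ ≤ a + ε := norm_add_le _ _
      linarith only [h1, h2]
    have habs0 : (0:ℝ) ≤ ‖μ'‖ := norm_nonneg _
    have hRle : ‖μ'‖ + a + ε ≤ 2*(1+a) := by linarith only [habsμ, hε1, ha0, habs0]
    have hpow1 : (‖μ'‖ + a + ε)^(n-1) ≤ (2*(1+a))^n := by
      have base1 : (1:ℝ) ≤ 2*(1+a) := by linarith only [ha0]
      calc (‖μ'‖ + a + ε)^(n-1) ≤ (2*(1+a))^(n-1) :=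
            pow_le_pow_left₀ (by positivity) hRle _
        _ ≤ (2*(1+a))^n := pow_le_pow_right₀ base1 (Nat.sub_le n 1)
    have hdn : ‖μ' - α‖^n ≤ K * (1+a)^n * ε := by
      calc ‖μ' - α‖^n
          ≤ (n.factorial:ℝ)*n*(‖μ'‖ + a + ε)^(n-1)*ε := hbound
        _ ≤ (n.factorial:ℝ)*n*(2*(1+a))^n*ε := by
            refine mul_le_mul_of_nonneg_right
              (mul_le_mul_of_nonneg_left hpow1 (by positivity)) (le_of_lt hε0)
        _ = K * (1+a)^n * ε := by rw [hK, mul_pow]; ring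
    have hdT : ‖μ' - α‖ ≤ T := by
      refine le_of_pow_le_pow_left₀ (Nat.pos_iff_ne_zero.1 hn) (le_of_lt hT0) ?_
      exact hdn.trans hmain
    exact hdT.trans hTle
  obtain ⟨α, hα, hdα⟩ := hdist μ hμ
  obtain ⟨β, hβ, hdβ⟩ := hdist ν hν
  have hold := hAspec α hα β hβ m hm hmN
  set w : ℂ := (2 * Real.pi * Complex.I) * ∑ i, ((m i : ℂ) / 2) * (ω i : ℂ) with hw
  have htri : ‖α - β - w‖ ≤
      ‖μ - ν - w‖ + ‖μ - α‖ + ‖ν - β‖ := by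
    have e : α - β - w = ((μ - ν - w) - (μ - α)) + (ν - β) := by ring
    rw [e]
    have t1 : ‖((μ - ν - w) - (μ - α)) + (ν - β)‖
        ≤ ‖(μ - ν - w) - (μ - α)‖ + ‖ν - β‖ :=
      norm_add_le _ _
    have t2 : ‖(μ - ν - w) - (μ - α)‖
        ≤ ‖μ - ν - w‖ + ‖μ - α‖ := by
      exact norm_sub_le _ _
    linarith only [t1, t2]
  have e2 : 3 * κ' / 4 / h^τ = κ'/h^τ - κ'/(8*h^τ) - κ'/(8*h^τ) := by
    field_simp
    ring
  rw [e2]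
  linarith only [hold, htri, hdα, hdβ]
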